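/- The space P̃₄ has exactly eight path components, namely the sets P̃₄ₑ = {φ ∈ P̃₄ : e₁a₂ > 0, e₂b₃ > 0 and e₃c₄ > 0} for the eight sign vectors e = (e₁,e₂,e₃) ∈ {−1,1}³, where a₂, b₃, c₄ denote the leading coefficients of the three component polynomials. -/

import Mathlib

open Polynomial

/-- `(f, g, h)` defines a polynomial knot: the map `t ↦ (f t, g t, h t)` is injective
and its derivative never vanishes. -/
def IsPolyKnot (f g h : Polynomial ℝ) : Prop :=
  Function.Injective (fun t : ℝ => (f.eval t, g.eval t, h.eval t)) ∧
  ∀ t : ℝ, ((derivative f).eval t, (derivative g).eval t, (derivative h).eval t)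
      ≠ ((0 : ℝ), (0 : ℝ), (0 : ℝ))

/-- First component polynomial of a tuple in `A₄ ≅ ℝ¹²`, with coefficient tuple
`(a₀, a₁, a₂, b₀, b₁, b₂, b₃, c₀, c₁, c₂, c₃, c₄)`. -/
noncomputable def fPoly (x : Fin 12 → ℝ) : Polynomial ℝ :=
  C (x 2) * X ^ 2 + C (x 1) * X + C (x 0)

/-- Second component polynomial of a tuple in `A₄ ≅ ℝ¹²`. -/
noncomputable def gPoly (x : Fin 12 → ℝ) : Polynomial ℝ :=
  C (x 6) * X ^ 3 + C (x 5) * X ^ 2 + C (x 4) * X + C (x 3)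

/-- Third component polynomial of a tuple in `A₄ ≅ ℝ¹²`. -/
noncomputable def hPoly (x : Fin 12 → ℝ) : Polynomial ℝ :=
  C (x 11) * X ^ 4 + C (x 10) * X ^ 3 + C (x 9) * X ^ 2 + C (x 8) * X + C (x 7)

/-- The set `P₄ ⊆ A₄ ≅ ℝ¹²` of tuples defining a polynomial knot `(f, g, h)` with
`deg f < deg g < deg h ≤ 4`. -/
def P4 : Set (Fin 12 → ℝ) :=
  {x | IsPolyKnot (fPoly x) (gPoly x) (hPoly x) ∧
    (fPoly x).natDegree < (gPoly x).natDegree ∧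
    (gPoly x).natDegree < (hPoly x).natDegree ∧ (hPoly x).natDegree ≤ 4}

/-- The set `P̃₄ ⊆ A₄ ≅ ℝ¹²` of tuples defining a polynomial knot `(f, g, h)` with
`deg f = 2`, `deg g = 3`, `deg h = 4`. -/
def Pt4 : Set (Fin 12 → ℝ) :=
  {x | IsPolyKnot (fPoly x) (gPoly x) (hPoly x) ∧
    (fPoly x).natDegree = 2 ∧ (gPoly x).natDegree = 3 ∧ (hPoly x).natDegree = 4}

/-! ### Auxiliary development -/

def W (a0 a1 a2 b0 b1 b2 b3 c0 c1 c2 c3 c4 : ℝ) : Fin 12 → ℝ :=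
  ![a0,a1,a2,b0,b1,b2,b3,c0,c1,c2,c3,c4]

lemma x_eq_W (x : Fin 12 → ℝ) :
    x = W (x 0) (x 1) (x 2) (x 3) (x 4) (x 5) (x 6) (x 7) (x 8) (x 9) (x 10) (x 11) := by
  funext i; fin_cases i <;> rfl

@[simp] lemma W_0 (a0 a1 a2 b0 b1 b2 b3 c0 c1 c2 c3 c4 : ℝ) :
    W a0 a1 a2 b0 b1 b2 b3 c0 c1 c2 c3 c4 0 = a0 := rfl
@[simp] lemma W_1 (a0 a1 a2 b0 b1 b2 b3 c0 c1 c2 c3 c4 : ℝ) :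
    W a0 a1 a2 b0 b1 b2 b3 c0 c1 c2 c3 c4 1 = a1 := rfl
@[simp] lemma W_2 (a0 a1 a2 b0 b1 b2 b3 c0 c1 c2 c3 c4 : ℝ) :
    W a0 a1 a2 b0 b1 b2 b3 c0 c1 c2 c3 c4 2 = a2 := rfl
@[simp] lemma W_3 (a0 a1 a2 b0 b1 b2 b3 c0 c1 c2 c3 c4 : ℝ) :
    W a0 a1 a2 b0 b1 b2 b3 c0 c1 c2 c3 c4 3 = b0 := rfl
@[simp] lemma W_4 (a0 a1 a2 b0 b1 b2 b3 c0 c1 c2 c3 c4 : ℝ) :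
    W a0 a1 a2 b0 b1 b2 b3 c0 c1 c2 c3 c4 4 = b1 := rfl
@[simp] lemma W_5 (a0 a1 a2 b0 b1 b2 b3 c0 c1 c2 c3 c4 : ℝ) :
    W a0 a1 a2 b0 b1 b2 b3 c0 c1 c2 c3 c4 5 = b2 := rfl
@[simp] lemma W_6 (a0 a1 a2 b0 b1 b2 b3 c0 c1 c2 c3 c4 : ℝ) :
    W a0 a1 a2 b0 b1 b2 b3 c0 c1 c2 c3 c4 6 = b3 := rfl
@[simp] lemma W_7 (a0 a1 a2 b0 b1 b2 b3 c0 c1 c2 c3 c4 : ℝ) :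
    W a0 a1 a2 b0 b1 b2 b3 c0 c1 c2 c3 c4 7 = c0 := rfl
@[simp] lemma W_8 (a0 a1 a2 b0 b1 b2 b3 c0 c1 c2 c3 c4 : ℝ) :
    W a0 a1 a2 b0 b1 b2 b3 c0 c1 c2 c3 c4 8 = c1 := rfl
@[simp] lemma W_9 (a0 a1 a2 b0 b1 b2 b3 c0 c1 c2 c3 c4 : ℝ) :
    W a0 a1 a2 b0 b1 b2 b3 c0 c1 c2 c3 c4 9 = c2 := rfl
@[simp] lemma W_10 (a0 a1 a2 b0 b1 b2 b3 c0 c1 c2 c3 c4 : ℝ) :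
    W a0 a1 a2 b0 b1 b2 b3 c0 c1 c2 c3 c4 10 = c3 := rfl
@[simp] lemma W_11 (a0 a1 a2 b0 b1 b2 b3 c0 c1 c2 c3 c4 : ℝ) :
    W a0 a1 a2 b0 b1 b2 b3 c0 c1 c2 c3 c4 11 = c4 := rfl

lemma W_continuous (f0 f1 f2 f3 f4 f5 f6 f7 f8 f9 f10 f11 : ℝ → ℝ)
    (h0 : Continuous f0) (h1 : Continuous f1) (h2 : Continuous f2) (h3 : Continuous f3)
    (h4 : Continuous f4) (h5 : Continuous f5) (h6 : Continuous f6) (h7 : Continuous f7)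
    (h8 : Continuous f8) (h9 : Continuous f9) (h10 : Continuous f10) (h11 : Continuous f11) :
    ∀ i, Continuous fun s => W (f0 s) (f1 s) (f2 s) (f3 s) (f4 s) (f5 s) (f6 s) (f7 s)
      (f8 s) (f9 s) (f10 s) (f11 s) i := by
  intro i; fin_cases i
  exacts [h0, h1, h2, h3, h4, h5, h6, h7, h8, h9, h10, h11]

def RKnot (x : Fin 12 → ℝ) : Prop := IsPolyKnot (fPoly x) (gPoly x) (hPoly x)

lemma rknot_iff (x : Fin 12 → ℝ) : RKnot x ↔
    (∀ s t : ℝ, x 2*s^2+x 1*s+x 0 = x 2*t^2+x 1*t+x 0 →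
      x 6*s^3+x 5*s^2+x 4*s+x 3 = x 6*t^3+x 5*t^2+x 4*t+x 3 →
      x 11*s^4+x 10*s^3+x 9*s^2+x 8*s+x 7 = x 11*t^4+x 10*t^3+x 9*t^2+x 8*t+x 7 →
      s = t) ∧
    (∀ t : ℝ, ¬(2*x 2*t+x 1 = 0 ∧ 3*x 6*t^2+2*x 5*t+x 4 = 0 ∧
      4*x 11*t^3+3*x 10*t^2+2*x 9*t+x 8 = 0)) := by
  have ef : ∀ t : ℝ, (fPoly x).eval t = x 2*t^2+x 1*t+x 0 := by intro t; simp [fPoly]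
  have eg : ∀ t : ℝ, (gPoly x).eval t = x 6*t^3+x 5*t^2+x 4*t+x 3 := by
    intro t; simp [gPoly]; try ring
  have eh : ∀ t : ℝ, (hPoly x).eval t = x 11*t^4+x 10*t^3+x 9*t^2+x 8*t+x 7 := by
    intro t; simp [hPoly]; try ring
  have df : ∀ t : ℝ, (derivative (fPoly x)).eval t = 2*x 2*t+x 1 := by
    intro t; simp [fPoly]; try ring
  have dg : ∀ t : ℝ, (derivative (gPoly x)).eval t = 3*x 6*t^2+2*x 5*t+x 4 := by
    intro t; simp [gPoly]; try ring
  have dh : ∀ t : ℝ, (derivative (hPoly x)).eval t = 4*x 11*t^3+3*x 10*t^2+2*x 9*t+x 8 := by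
    intro t; simp [hPoly]; try ring
  unfold RKnot IsPolyKnot Function.Injective
  simp only [ef, eg, eh, df, dg, dh, Prod.mk.injEq, ne_eq, not_and, and_imp]

lemma mem_Pt4_iff (x : Fin 12 → ℝ) :
    x ∈ Pt4 ↔ RKnot x ∧ x 2 ≠ 0 ∧ x 6 ≠ 0 ∧ x 11 ≠ 0 := by
  constructor
  · rintro ⟨hk, h2, h3, h4⟩
    refine ⟨hk, ?_, ?_, ?_⟩
    · intro h
      have hle : (fPoly x).natDegree ≤ 1 := by
        unfold fPoly; rw [h]; simp only [map_zero, zero_mul, zero_add]; compute_degree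
      omega
    · intro h
      have hle : (gPoly x).natDegree ≤ 2 := by
        unfold gPoly; rw [h]; simp only [map_zero, zero_mul, zero_add]; compute_degree
      omega
    · intro h
      have hle : (hPoly x).natDegree ≤ 3 := by
        unfold hPoly; rw [h]; simp only [map_zero, zero_mul, zero_add]; compute_degree
      omega
  · rintro ⟨hk, h2, h6, h11⟩
    refine ⟨hk, ?_, ?_, ?_⟩
    · unfold fPoly; compute_degree!
    · unfold gPoly; compute_degree!
    · unfold hPoly; compute_degree!

/-- The algebraic condition on `(b₃, b₁, c₃, c₁)` equivalent (for leading coefficients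
nonzero) to a "semi-normal" tuple being a knot. -/
def SemiOK (b3 b1 c3 c1 : ℝ) : Prop :=
  (b1 ≠ 0 ∨ c1 ≠ 0) ∧ ∀ t : ℝ, t ≠ 0 → ¬(b3*t^2+b1 = 0 ∧ c3*t^2+c1 = 0)

lemma semiOK_iff {b3 : ℝ} (hb : b3 ≠ 0) (b1 c3 c1 : ℝ) :
    SemiOK b3 b1 c3 c1 ↔
      (b3*c1 - b1*c3 ≠ 0 ∨ ∃ μ : ℝ, 0 < μ ∧ b1 = μ*b3 ∧ c1 = μ*c3) := by
  constructor
  · rintro ⟨hne, hroot⟩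
    by_cases hD : b3*c1 - b1*c3 = 0
    · right
      refine ⟨b1/b3, ?_, by field_simp, by field_simp; linear_combination hD⟩
      rcases lt_trichotomy (b1/b3) 0 with h|h|h
      · exfalso
        have hpos : 0 < -(b1/b3) := by linarith
        have ht : Real.sqrt (-(b1/b3)) ≠ 0 := by positivity
        have ht2 : Real.sqrt (-(b1/b3))^2 = -(b1/b3) := Real.sq_sqrt hpos.le
        refine hroot _ ht ⟨?_, ?_⟩
        · rw [ht2]; field_simp; ring
        · rw [ht2]; field_simp; linear_combination hD
      · exfalso
        have hb1 : b1 = 0 := by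
          field_simp at h; simpa using h
        have hc1 : c1 = 0 := by
          have : b3*c1 = 0 := by rw [hb1] at hD; linarith
          rcases mul_eq_zero.mp this with h'|h'
          · exact absurd h' hb
          · exact h'
        rcases hne with h'|h' <;> [exact h' hb1; exact h' hc1]
      · exact h
    · left; exact hD
  · rintro (hD | ⟨μ, hμ, hb1, hc1⟩)
    · constructor
      · by_contra h
        push_neg at h
        rw [h.1, h.2] at hD
        simp at hD
      · rintro t ht ⟨h1, h2⟩
        exact hD (by linear_combination b3*h2 - c3*h1)
    · constructor
      · left; rw [hb1]; exact mul_ne_zero (ne_of_gt hμ) hb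
      · rintro t ht ⟨h1, h2⟩
        rw [hb1] at h1
        have h3 : b3*(t^2+μ) = 0 := by linear_combination h1
        have h4 : t^2 + μ = 0 := by
          rcases mul_eq_zero.mp h3 with h'|h'
          · exact absurd h' hb
          · exact h'
        nlinarith [sq_nonneg t]

lemma rknot_semi {a2 b3 : ℝ} (ha : a2 ≠ 0) (hb : b3 ≠ 0) (b1 b2 c1 c2 c3 c4 : ℝ) :
    RKnot (W 0 0 a2 0 b1 b2 b3 0 c1 c2 c3 c4) ↔ SemiOK b3 b1 c3 c1 := by
  rw [rknot_iff]
  simp only [W_0, W_1, W_2, W_3, W_4, W_5, W_6, W_7, W_8, W_9, W_10, W_11,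
    mul_zero, zero_mul, add_zero, zero_add]
  constructor
  · rintro ⟨hinj, hder⟩
    constructor
    · by_contra hcon
      push_neg at hcon
      exact hder 0 ⟨by ring, by rw [hcon.1]; ring, by rw [hcon.2]; ring⟩
    · rintro t ht ⟨h1, h2⟩
      have heq : -t = t :=
        hinj (-t) t (by ring) (by linear_combination (-2*t)*h1)
          (by linear_combination (-2*t)*h2)
      exact ht (by linarith)
  · rintro ⟨hne, hroot⟩
    constructor
    · intro s t e1 e2 e3
      have hst : s^2 = t^2 := mul_left_cancel₀ ha e1
      have hfac : (s-t)*(s+t) = 0 := by linear_combination hst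
      rcases mul_eq_zero.mp hfac with h|h
      · linarith
      · have hs : s = -t := by linarith
        subst hs
        by_cases ht : t = 0
        · rw [ht]; ring
        · exfalso
          apply hroot t ht
          constructor
          · have h2' : t*(b3*t^2+b1) = 0 := by linear_combination (-1/2)*e2
            rcases mul_eq_zero.mp h2' with h'|h'
            · exact absurd h' ht
            · exact h'
          · have h3' : t*(c3*t^2+c1) = 0 := by linear_combination (-1/2)*e3
            rcases mul_eq_zero.mp h3' with h'|h'
            · exact absurd h' ht
            · exact h'
    · rintro t ⟨d1, d2, d3⟩
      have ht : t = 0 := by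
        rcases mul_eq_zero.mp d1 with h'|h'
        · exfalso; rcases mul_eq_zero.mp h' with h''|h''
          · norm_num at h''
          · exact ha h''
        · exact h'
      subst ht
      norm_num at d2 d3
      rcases hne with h'|h' <;> [exact h' d2; exact h' d3]

lemma rknot_translate {a0 a1 a2 b0 b1 b2 b3 c0 c1 c2 c3 c4 : ℝ} (e k1 k2 k3 : ℝ)
    (h : RKnot (W a0 a1 a2 b0 b1 b2 b3 c0 c1 c2 c3 c4)) :
    RKnot (W k1 (2*a2*e+a1) a2 k2 (3*b3*e^2+2*b2*e+b1) (3*b3*e+b2) b3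
      k3 (4*c4*e^3+3*c3*e^2+2*c2*e+c1) (6*c4*e^2+3*c3*e+c2) (4*c4*e+c3) c4) := by
  rw [rknot_iff] at h ⊢
  simp only [W_0, W_1, W_2, W_3, W_4, W_5, W_6, W_7, W_8, W_9, W_10, W_11] at h ⊢
  obtain ⟨hinj, hder⟩ := h
  constructor
  · intro s t e1 e2 e3
    have := hinj (s+e) (t+e) (by linear_combination e1) (by linear_combination e2)
      (by linear_combination e3)
    linarith
  · rintro t ⟨d1, d2, d3⟩
    exact hder (t+e) ⟨by linear_combination d1, by linear_combination d2,
      by linear_combination d3⟩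

lemma joined_seg {x y : Fin 12 → ℝ} (φ : ℝ → Fin 12 → ℝ)
    (hc : ∀ i, Continuous fun s => φ s i)
    (h0 : φ 0 = x) (h1 : φ 1 = y)
    (hmem : ∀ s : ℝ, 0 ≤ s → s ≤ 1 → φ s ∈ Pt4) :
    JoinedIn Pt4 x y := by
  refine ⟨⟨⟨fun t => φ t, (continuous_pi hc).comp continuous_subtype_val⟩, ?_, ?_⟩, ?_⟩
  · simpa using h0
  · simpa using h1
  · intro t; exact hmem t t.2.1 t.2.2

lemma seg_gen (A B1 B2 B3 C1 C2 C3 C4 : ℝ → ℝ)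
    (hA : Continuous A) (hB1 : Continuous B1) (hB2 : Continuous B2) (hB3 : Continuous B3)
    (hC1 : Continuous C1) (hC2 : Continuous C2) (hC3 : Continuous C3) (hC4 : Continuous C4)
    (hAn : ∀ s : ℝ, 0 ≤ s → s ≤ 1 → A s ≠ 0)
    (hBn : ∀ s : ℝ, 0 ≤ s → s ≤ 1 → B3 s ≠ 0)
    (hCn : ∀ s : ℝ, 0 ≤ s → s ≤ 1 → C4 s ≠ 0)
    (hOK : ∀ s : ℝ, 0 ≤ s → s ≤ 1 → SemiOK (B3 s) (B1 s) (C3 s) (C1 s)) :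
    JoinedIn Pt4
      (W 0 0 (A 0) 0 (B1 0) (B2 0) (B3 0) 0 (C1 0) (C2 0) (C3 0) (C4 0))
      (W 0 0 (A 1) 0 (B1 1) (B2 1) (B3 1) 0 (C1 1) (C2 1) (C3 1) (C4 1)) := by
  apply joined_seg
    (fun s => W 0 0 (A s) 0 (B1 s) (B2 s) (B3 s) 0 (C1 s) (C2 s) (C3 s) (C4 s))
  · exact W_continuous _ _ _ _ _ _ _ _ _ _ _ _ continuous_const continuous_const hA
      continuous_const hB1 hB2 hB3 continuous_const hC1 hC2 hC3 hC4
  · rfl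
  · rfl
  · intro s hs0 hs1
    rw [mem_Pt4_iff]
    exact ⟨(rknot_semi (hAn s hs0 hs1) (hBn s hs0 hs1) _ _ _ _ _ _).mpr (hOK s hs0 hs1),
      hAn s hs0 hs1, hBn s hs0 hs1, hCn s hs0 hs1⟩

/-- sign representative -/
noncomputable def sg (a : ℝ) : ℝ := if 0 < a then 1 else -1

lemma sg_ne (a : ℝ) : sg a ≠ 0 := by unfold sg; split <;> norm_num

lemma sg_conv {a : ℝ} (ha : a ≠ 0) : ∀ s : ℝ, 0 ≤ s → s ≤ 1 → (1-s)*a + s*sg a ≠ 0 := by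
  intro s h0 h1
  rcases lt_or_gt_of_ne ha with h|h
  · have hsg : sg a = -1 := if_neg (by linarith)
    rw [hsg]
    rcases eq_or_lt_of_le h0 with h'|h'
    · rw [← h']; simpa using ha
    · have : (1-s)*a ≤ 0 := mul_nonpos_of_nonneg_of_nonpos (by linarith) h.le
      have : (1-s)*a + s*(-1) < 0 := by nlinarith
      linarith
  · have hsg : sg a = 1 := if_pos h
    rw [hsg]
    rcases eq_or_lt_of_le h0 with h'|h'
    · rw [← h']; simpa using ha
    · have : 0 ≤ (1-s)*a := mul_nonneg (by linarith) h.le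
      have : 0 < (1-s)*a + s*1 := by nlinarith
      linarith


lemma step1 (a0 a1 a2 b0 b1 b2 b3 c0 c1 c2 c3 c4 : ℝ) (ha : a2 ≠ 0) (hb : b3 ≠ 0)
    (hc : c4 ≠ 0) (hk : RKnot (W a0 a1 a2 b0 b1 b2 b3 c0 c1 c2 c3 c4)) :
    ∃ B1 B2 D1 D2 D3 : ℝ, JoinedIn Pt4 (W a0 a1 a2 b0 b1 b2 b3 c0 c1 c2 c3 c4)
      (W 0 0 a2 0 B1 B2 b3 0 D1 D2 D3 c4) := by
  set e : ℝ := -a1/(2*a2) with he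
  have he0 : 2*a2*(1*e)+a1 = 0 := by rw [he]; field_simp; ring
  refine ⟨3*b3*(1*e)^2+2*b2*(1*e)+b1, 3*b3*(1*e)+b2,
    4*c4*(1*e)^3+3*c3*(1*e)^2+2*c2*(1*e)+c1, 6*c4*(1*e)^2+3*c3*(1*e)+c2,
    4*c4*(1*e)+c3, ?_⟩
  apply joined_seg (fun s => W
    ((1-s)*(a2*(s*e)^2+a1*(s*e)+a0))
    (2*a2*(s*e)+a1) a2
    ((1-s)*(b3*(s*e)^3+b2*(s*e)^2+b1*(s*e)+b0))
    (3*b3*(s*e)^2+2*b2*(s*e)+b1) (3*b3*(s*e)+b2) b3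
    ((1-s)*(c4*(s*e)^4+c3*(s*e)^3+c2*(s*e)^2+c1*(s*e)+c0))
    (4*c4*(s*e)^3+3*c3*(s*e)^2+2*c2*(s*e)+c1)
    (6*c4*(s*e)^2+3*c3*(s*e)+c2) (4*c4*(s*e)+c3) c4)
  · exact W_continuous _ _ _ _ _ _ _ _ _ _ _ _ (by fun_prop) (by fun_prop) (by fun_prop)
      (by fun_prop) (by fun_prop) (by fun_prop) (by fun_prop) (by fun_prop) (by fun_prop)
      (by fun_prop) (by fun_prop) (by fun_prop)
  · norm_num
  · rw [he0]; norm_num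
  · intro s hs0 hs1
    rw [mem_Pt4_iff]
    exact ⟨rknot_translate (s*e) _ _ _ hk, ha, hb, hc⟩

lemma step2 (a2 B1 B2 b3 D1 D2 D3 c4 : ℝ) (ha : a2 ≠ 0) (hb : b3 ≠ 0) (hc : c4 ≠ 0)
    (hOK : SemiOK b3 B1 D3 D1) :
    JoinedIn Pt4 (W 0 0 a2 0 B1 B2 b3 0 D1 D2 D3 c4) (W 0 0 a2 0 B1 0 b3 0 D1 0 D3 c4) := by
  have h := seg_gen (fun _ => a2) (fun _ => B1) (fun s => (1-s)*B2) (fun _ => b3)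
    (fun _ => D1) (fun s => (1-s)*D2) (fun _ => D3) (fun _ => c4)
    (by fun_prop) (by fun_prop) (by fun_prop) (by fun_prop)
    (by fun_prop) (by fun_prop) (by fun_prop) (by fun_prop)
    (fun s _ _ => ha) (fun s _ _ => hb) (fun s _ _ => hc) (fun s _ _ => hOK)
  norm_num at h
  exact h

lemma step3D (a2 B1 b3 D1 D3 c4 : ℝ) (ha : a2 ≠ 0) (hb : b3 ≠ 0) (hc : c4 ≠ 0)
    (hD : b3*D1 - B1*D3 ≠ 0) :
    JoinedIn Pt4 (W 0 0 a2 0 B1 0 b3 0 D1 0 D3 c4) (W 0 0 a2 0 b3 0 b3 0 0 0 0 c4) := by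
  set γ : ℝ := (b3*D1 - B1*D3)/b3 with hγ
  have hγne : b3*γ ≠ 0 := by rw [hγ]; field_simp; exact hD
  have seg3 : JoinedIn Pt4 (W 0 0 a2 0 B1 0 b3 0 D1 0 D3 c4)
      (W 0 0 a2 0 0 0 b3 0 γ 0 D3 c4) := by
    have h := seg_gen (fun _ => a2) (fun s => (1-s)*B1) (fun _ => 0) (fun _ => b3)
      (fun s => (1-s)*D1 + s*γ) (fun _ => 0) (fun _ => D3) (fun _ => c4)
      (by fun_prop) (by fun_prop) (by fun_prop) (by fun_prop)
      (by fun_prop) (by fun_prop) (by fun_prop) (by fun_prop)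
      (fun s _ _ => ha) (fun s _ _ => hb) (fun s _ _ => hc)
      (fun s _ _ => by
        rw [semiOK_iff hb]
        left
        have heq : b3*((1-s)*D1 + s*γ) - ((1-s)*B1)*D3 = b3*D1 - B1*D3 := by
          rw [hγ]; field_simp; ring
        rw [heq]; exact hD)
    norm_num at h
    exact h
  have seg4 : JoinedIn Pt4 (W 0 0 a2 0 0 0 b3 0 γ 0 D3 c4)
      (W 0 0 a2 0 0 0 b3 0 γ 0 0 c4) := by
    have h := seg_gen (fun _ => a2) (fun _ => 0) (fun _ => 0) (fun _ => b3)
      (fun _ => γ) (fun _ => 0) (fun s => (1-s)*D3) (fun _ => c4)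
      (by fun_prop) (by fun_prop) (by fun_prop) (by fun_prop)
      (by fun_prop) (by fun_prop) (by fun_prop) (by fun_prop)
      (fun s _ _ => ha) (fun s _ _ => hb) (fun s _ _ => hc)
      (fun s _ _ => by
        rw [semiOK_iff hb]
        left
        simpa using hγne)
    norm_num at h
    exact h
  have seg5 : JoinedIn Pt4 (W 0 0 a2 0 0 0 b3 0 γ 0 0 c4)
      (W 0 0 a2 0 b3 0 b3 0 γ 0 0 c4) := by
    have h := seg_gen (fun _ => a2) (fun s => s*b3) (fun _ => 0) (fun _ => b3)
      (fun _ => γ) (fun _ => 0) (fun _ => 0) (fun _ => c4)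
      (by fun_prop) (by fun_prop) (by fun_prop) (by fun_prop)
      (by fun_prop) (by fun_prop) (by fun_prop) (by fun_prop)
      (fun s _ _ => ha) (fun s _ _ => hb) (fun s _ _ => hc)
      (fun s _ _ => by
        rw [semiOK_iff hb]
        left
        simpa using hγne)
    norm_num at h
    exact h
  have seg6 : JoinedIn Pt4 (W 0 0 a2 0 b3 0 b3 0 γ 0 0 c4)
      (W 0 0 a2 0 b3 0 b3 0 0 0 0 c4) := by
    have h := seg_gen (fun _ => a2) (fun _ => b3) (fun _ => 0) (fun _ => b3)
      (fun s => (1-s)*γ) (fun _ => 0) (fun _ => 0) (fun _ => c4)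
      (by fun_prop) (by fun_prop) (by fun_prop) (by fun_prop)
      (by fun_prop) (by fun_prop) (by fun_prop) (by fun_prop)
      (fun s _ _ => ha) (fun s _ _ => hb) (fun s _ _ => hc)
      (fun s hs0 hs1 => by
        rw [semiOK_iff hb]
        rcases eq_or_lt_of_le hs1 with h'|h'
        · right; exact ⟨1, one_pos, by ring, by rw [← h']; ring⟩
        · left
          intro hcon
          have h1s : (1:ℝ)-s ≠ 0 := by linarith
          apply hγne
          have hz : (1-s)*(b3*γ) = 0 := by linear_combination hcon
          rcases mul_eq_zero.mp hz with h''|h''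
          · exact absurd h'' h1s
          · rw [h''])
    norm_num at h
    exact h
  exact seg3.trans (seg4.trans (seg5.trans seg6))

lemma step3mu (a2 B1 b3 D1 D3 c4 μ : ℝ) (ha : a2 ≠ 0) (hb : b3 ≠ 0) (hc : c4 ≠ 0)
    (hμ : 0 < μ) (hμb : B1 = μ*b3) (hμc : D1 = μ*D3) :
    JoinedIn Pt4 (W 0 0 a2 0 B1 0 b3 0 D1 0 D3 c4) (W 0 0 a2 0 b3 0 b3 0 0 0 0 c4) := by
  have seg3 : JoinedIn Pt4 (W 0 0 a2 0 B1 0 b3 0 D1 0 D3 c4)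
      (W 0 0 a2 0 B1 0 b3 0 0 0 0 c4) := by
    have h := seg_gen (fun _ => a2) (fun _ => B1) (fun _ => 0) (fun _ => b3)
      (fun s => (1-s)*D1) (fun _ => 0) (fun s => (1-s)*D3) (fun _ => c4)
      (by fun_prop) (by fun_prop) (by fun_prop) (by fun_prop)
      (by fun_prop) (by fun_prop) (by fun_prop) (by fun_prop)
      (fun s _ _ => ha) (fun s _ _ => hb) (fun s _ _ => hc)
      (fun s _ _ => by
        rw [semiOK_iff hb]
        right
        exact ⟨μ, hμ, hμb, by rw [hμc]; ring⟩)
    norm_num at h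
    exact h
  have seg4 : JoinedIn Pt4 (W 0 0 a2 0 B1 0 b3 0 0 0 0 c4)
      (W 0 0 a2 0 b3 0 b3 0 0 0 0 c4) := by
    have h := seg_gen (fun _ => a2) (fun s => (1-s)*B1 + s*b3) (fun _ => 0) (fun _ => b3)
      (fun _ => 0) (fun _ => 0) (fun _ => 0) (fun _ => c4)
      (by fun_prop) (by fun_prop) (by fun_prop) (by fun_prop)
      (by fun_prop) (by fun_prop) (by fun_prop) (by fun_prop)
      (fun s _ _ => ha) (fun s _ _ => hb) (fun s _ _ => hc)
      (fun s hs0 hs1 => by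
        rw [semiOK_iff hb]
        right
        refine ⟨(1-s)*μ + s, ?_, by rw [hμb]; ring, by ring⟩
        rcases eq_or_lt_of_le hs0 with h'|h'
        · rw [← h']; simpa using hμ
        · nlinarith)
    norm_num at h
    exact h
  exact seg3.trans seg4

lemma step4 (a2 b3 c4 : ℝ) (ha : a2 ≠ 0) (hb : b3 ≠ 0) (hc : c4 ≠ 0) :
    JoinedIn Pt4 (W 0 0 a2 0 b3 0 b3 0 0 0 0 c4)
      (W 0 0 (sg a2) 0 (sg b3) 0 (sg b3) 0 0 0 0 (sg c4)) := by
  have h := seg_gen (fun s => (1-s)*a2 + s*sg a2) (fun s => (1-s)*b3 + s*sg b3)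
    (fun _ => 0) (fun s => (1-s)*b3 + s*sg b3)
    (fun _ => 0) (fun _ => 0) (fun _ => 0) (fun s => (1-s)*c4 + s*sg c4)
    (by fun_prop) (by fun_prop) (by fun_prop) (by fun_prop)
    (by fun_prop) (by fun_prop) (by fun_prop) (by fun_prop)
    (sg_conv ha) (sg_conv hb) (sg_conv hc)
    (fun s hs0 hs1 => by
      rw [semiOK_iff (sg_conv hb s hs0 hs1)]
      right
      exact ⟨1, one_pos, by ring, by ring⟩)
  norm_num at h
  exact h


lemma joined_to_std (x : Fin 12 → ℝ) (hx : x ∈ Pt4) :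
    JoinedIn Pt4 x (W 0 0 (sg (x 2)) 0 (sg (x 6)) 0 (sg (x 6)) 0 0 0 0 (sg (x 11))) := by
  obtain ⟨a0,a1,a2,b0,b1,b2,b3,c0,c1,c2,c3,c4, rfl⟩ :
      ∃ a0 a1 a2 b0 b1 b2 b3 c0 c1 c2 c3 c4,
        x = W a0 a1 a2 b0 b1 b2 b3 c0 c1 c2 c3 c4 :=
    ⟨_,_,_,_,_,_,_,_,_,_,_,_, x_eq_W x⟩
  obtain ⟨hk, ha, hb, hc⟩ := (mem_Pt4_iff _).mp hx
  simp only [W_2, W_6, W_11] at ha hb hc ⊢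
  obtain ⟨B1, B2, D1, D2, D3, h1⟩ := step1 a0 a1 a2 b0 b1 b2 b3 c0 c1 c2 c3 c4 ha hb hc hk
  have hOK1 : SemiOK b3 B1 D3 D1 :=
    (rknot_semi ha hb _ _ _ _ _ _).mp ((mem_Pt4_iff _).mp h1.target_mem).1
  have h2 := step2 a2 B1 B2 b3 D1 D2 D3 c4 ha hb hc hOK1
  have h3 : JoinedIn Pt4 (W 0 0 a2 0 B1 0 b3 0 D1 0 D3 c4)
      (W 0 0 a2 0 b3 0 b3 0 0 0 0 c4) := by
    rcases (semiOK_iff hb B1 D3 D1).mp hOK1 with hD | ⟨μ, hμ, hμb, hμc⟩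
    · exact step3D a2 B1 b3 D1 D3 c4 ha hb hc hD
    · exact step3mu a2 B1 b3 D1 D3 c4 μ ha hb hc hμ hμb hμc
  exact h1.trans (h2.trans (h3.trans (step4 a2 b3 c4 ha hb hc)))

lemma pt4_coord_ne (x : Fin 12 → ℝ) (hx : x ∈ Pt4) :
    x 2 ≠ 0 ∧ x 6 ≠ 0 ∧ x 11 ≠ 0 := ((mem_Pt4_iff x).mp hx).2

lemma sign_of_joined {x y : Fin 12 → ℝ} (h : JoinedIn Pt4 x y) (i : Fin 12)
    (hne : ∀ z ∈ Pt4, z i ≠ 0) : (0 < x i ↔ 0 < y i) := by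
  obtain ⟨γ, hγ⟩ := h
  set F : ℝ → ℝ := fun t => γ.extend t i with hF
  have hFc : Continuous F := (continuous_apply i).comp γ.continuous_extend
  have hmem : ∀ t : ℝ, γ.extend t ∈ Pt4 := by
    intro t
    show γ (Set.projIcc 0 1 zero_le_one t) ∈ Pt4
    exact hγ _
  have hFne : ∀ t : ℝ, F t ≠ 0 := fun t => hne _ (hmem t)
  have h0 : F 0 = x i := by rw [hF]; simp
  have h1 : F 1 = y i := by rw [hF]; simp
  constructor
  · intro hx
    by_contra hy
    have hy' : F 1 < 0 := lt_of_le_of_ne (by rw [h1]; exact not_lt.mp hy) (hFne 1)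
    have hmem0 : (0:ℝ) ∈ Set.Icc (F 1) (F 0) := ⟨hy'.le, by rw [h0]; exact hx.le⟩
    obtain ⟨c, _, hc⟩ :=
      intermediate_value_Icc' (by norm_num : (0:ℝ) ≤ 1) hFc.continuousOn hmem0
    exact hFne c hc
  · intro hy
    by_contra hx
    have hx' : F 0 < 0 := lt_of_le_of_ne (by rw [h0]; exact not_lt.mp hx) (hFne 0)
    have hmem0 : (0:ℝ) ∈ Set.Icc (F 0) (F 1) := ⟨hx'.le, by rw [h1]; exact hy.le⟩
    obtain ⟨c, _, hc⟩ :=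
      intermediate_value_Icc (by norm_num : (0:ℝ) ≤ 1) hFc.continuousOn hmem0
    exact hFne c hc

lemma sg_congr {a b : ℝ} (h : 0 < a ↔ 0 < b) : sg a = sg b := by
  unfold sg
  by_cases ha : 0 < a
  · rw [if_pos ha, if_pos (h.mp ha)]
  · rw [if_neg ha, if_neg (fun hb => ha (h.mpr hb))]

theorem stmt_14 :
    (∀ e₁ e₂ e₃ : ℝ, (e₁ = 1 ∨ e₁ = -1) → (e₂ = 1 ∨ e₂ = -1) → (e₃ = 1 ∨ e₃ = -1) →
      ({x ∈ Pt4 | 0 < e₁ * x 2 ∧ 0 < e₂ * x 6 ∧ 0 < e₃ * x 11}).Nonempty) ∧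
    ∀ x ∈ Pt4, ∀ y ∈ Pt4,
      (JoinedIn Pt4 x y ↔
        ((0 < x 2 ↔ 0 < y 2) ∧ (0 < x 6 ↔ 0 < y 6) ∧ (0 < x 11 ↔ 0 < y 11))) := by
  constructor
  · intro e₁ e₂ e₃ he₁ he₂ he₃
    have he₁' : e₁ ≠ 0 := by rcases he₁ with h|h <;> rw [h] <;> norm_num
    have he₂' : e₂ ≠ 0 := by rcases he₂ with h|h <;> rw [h] <;> norm_num
    have he₃' : e₃ ≠ 0 := by rcases he₃ with h|h <;> rw [h] <;> norm_num
    refine ⟨W 0 0 e₁ 0 e₂ 0 e₂ 0 0 0 0 e₃, ?_, ?_, ?_, ?_⟩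
    · show W 0 0 e₁ 0 e₂ 0 e₂ 0 0 0 0 e₃ ∈ Pt4; rw [mem_Pt4_iff]
      refine ⟨?_, he₁', he₂', he₃'⟩
      rw [RKnot] at *
      rw [show IsPolyKnot (fPoly (W 0 0 e₁ 0 e₂ 0 e₂ 0 0 0 0 e₃))
          (gPoly (W 0 0 e₁ 0 e₂ 0 e₂ 0 0 0 0 e₃)) (hPoly (W 0 0 e₁ 0 e₂ 0 e₂ 0 0 0 0 e₃)) =
          RKnot (W 0 0 e₁ 0 e₂ 0 e₂ 0 0 0 0 e₃) from rfl]
      rw [rknot_semi he₁' he₂', semiOK_iff he₂']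
      right
      exact ⟨1, one_pos, by ring, by ring⟩
    · show 0 < e₁ * e₁
      rcases he₁ with h|h <;> rw [h] <;> norm_num
    · show 0 < e₂ * e₂
      rcases he₂ with h|h <;> rw [h] <;> norm_num
    · show 0 < e₃ * e₃
      rcases he₃ with h|h <;> rw [h] <;> norm_num
  · intro x hx y hy
    constructor
    · intro hJ
      refine ⟨sign_of_joined hJ 2 ?_, sign_of_joined hJ 6 ?_, sign_of_joined hJ 11 ?_⟩
      · exact fun z hz => (pt4_coord_ne z hz).1
      · exact fun z hz => (pt4_coord_ne z hz).2.1
      · exact fun z hz => (pt4_coord_ne z hz).2.2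
    · rintro ⟨h2, h6, h11⟩
      have hx' := joined_to_std x hx
      have hy' := joined_to_std y hy
      rw [sg_congr h2, sg_congr h6, sg_congr h11] at hx'
      exact hx'.trans hy'.symm
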